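/- In the algebra G(A,B) generated by (u_{ij})_{1≤i,j≤n}, D, D^{-1} subject to u^t A u = A D, u B u^t = B D, D D^{-1} = D^{-1} D = 1, the commutation relation B A D u = u D B A holds; equivalently D u D^{-1} = A^{-1} B^{-1} u B A (as matrices of algebra elements). -/

import Mathlib

open Matrix

/-- In the algebra `G(A,B)` (equivalently, in any algebra containing elements `u i j`, `D`,
`D⁻¹` satisfying the defining relations `uᵀ A u = A 𝔻`, `u B uᵀ = B 𝔻`, `𝔻 𝔻⁻¹ = 𝔻⁻¹ 𝔻 = 1`),
the commutation relation `B A 𝔻 u = u 𝔻 B A` holds; equivalently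
`𝔻 u 𝔻⁻¹ = A⁻¹ B⁻¹ u B A` (as matrices of algebra elements). -/
theorem stmt1 {k : Type*} [Field k] {n : ℕ} (hn : 2 ≤ n)
    (A B : Matrix (Fin n) (Fin n) k) (hA : IsUnit A) (hB : IsUnit B)
    {R : Type*} [Ring R] [Algebra k R]
    (u : Matrix (Fin n) (Fin n) R) (D Dinv : R)
    (relA : uᵀ * A.map (algebraMap k R) * u = D • A.map (algebraMap k R))
    (relB : u * B.map (algebraMap k R) * uᵀ = D • B.map (algebraMap k R))
    (relD : D * Dinv = 1) (relD' : Dinv * D = 1) :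
    (B.map (algebraMap k R) * A.map (algebraMap k R)) * (D • u)
      = u * (D • (B.map (algebraMap k R) * A.map (algebraMap k R))) ∧
    (fun i j => D * u i j * Dinv)
      = (A⁻¹.map (algebraMap k R) * B⁻¹.map (algebraMap k R)) * u *
          (B.map (algebraMap k R) * A.map (algebraMap k R)) := by
  set f := algebraMap k R with hf
  -- scalar matrices move past the central-ish smul
  have L1 : ∀ (M : Matrix (Fin n) (Fin n) k) (N : Matrix (Fin n) (Fin n) R),
      M.map f * (D • N) = D • (M.map f * N) := by
    intro M N
    ext i j
    simp only [Matrix.mul_apply, Matrix.smul_apply, Matrix.map_apply, smul_eq_mul,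
      Finset.mul_sum]
    refine Finset.sum_congr rfl fun x _ => ?_
    rw [← mul_assoc, Algebra.commutes, mul_assoc]
  -- key commutation
  have key : (B * A).map f * (D • u) = u * (D • ((B * A).map f)) := by
    calc (B * A).map f * (D • u) = D • ((B * A).map f * u) := L1 _ _
      _ = D • (B.map f * A.map f * u) := by rw [Matrix.map_mul]
      _ = ((D • B.map f) * A.map f) * u := by rw [smul_mul_assoc, smul_mul_assoc]
      _ = ((u * B.map f * uᵀ) * A.map f) * u := by rw [relB]
      _ = u * B.map f * (uᵀ * A.map f * u) := by simp only [mul_assoc]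
      _ = u * B.map f * (D • A.map f) := by rw [relA]
      _ = u * (B.map f * (D • A.map f)) := by rw [mul_assoc]
      _ = u * (D • (B.map f * A.map f)) := by rw [L1]
      _ = u * (D • ((B * A).map f)) := by rw [Matrix.map_mul]
  have part1 : (B.map f * A.map f) * (D • u)
      = u * (D • (B.map f * A.map f)) := by
    rw [← Matrix.map_mul]; exact key
  refine ⟨part1, ?_⟩
  -- invertibility of (B*A).map f
  have hdet : IsUnit (B * A).det := (Matrix.isUnit_iff_isUnit_det _).mp (hB.mul hA)
  have hinv : ((B * A)⁻¹).map f * (B * A).map f = 1 := by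
    rw [← Matrix.map_mul, Matrix.nonsing_inv_mul _ hdet,
      Matrix.map_one f (map_zero f) (map_one f)]
  -- peel off the left factor
  have hDu : D • u = ((B * A)⁻¹).map f * (u * (D • ((B * A).map f))) := by
    rw [← key, ← mul_assoc, hinv, one_mul]
  -- right multiplication by Dinv • 1 kills the D
  have L2 : ∀ (M : Matrix (Fin n) (Fin n) k),
      (D • M.map f) * (Dinv • (1 : Matrix (Fin n) (Fin n) R)) = M.map f := by
    intro M
    ext i j
    simp only [Matrix.mul_apply, Matrix.smul_apply, Matrix.one_apply, Matrix.map_apply,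
      smul_eq_mul, mul_ite, mul_one, mul_zero, Finset.sum_ite_eq', Finset.mem_univ, if_true]
    rw [← Algebra.commutes, mul_assoc, relD, mul_one]
  have lhs_eq : (fun i j => D * u i j * Dinv)
      = (D • u) * (Dinv • (1 : Matrix (Fin n) (Fin n) R)) := by
    funext i j
    simp only [Matrix.mul_apply, Matrix.smul_apply, Matrix.one_apply, smul_eq_mul,
      mul_ite, mul_one, mul_zero, Finset.sum_ite_eq', Finset.mem_univ, if_true]
  have hBAinv : ((B * A)⁻¹).map f = A⁻¹.map f * B⁻¹.map f := by
    rw [Matrix.mul_inv_rev, Matrix.map_mul]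
  calc (show Matrix (Fin n) (Fin n) R from fun i j => D * u i j * Dinv)
      = (D • u) * (Dinv • (1 : Matrix (Fin n) (Fin n) R)) := lhs_eq
    _ = ((B * A)⁻¹).map f * (u * (D • ((B * A).map f))) *
        (Dinv • (1 : Matrix (Fin n) (Fin n) R)) := by rw [hDu]
    _ = ((B * A)⁻¹).map f * u * ((D • ((B * A).map f)) *
        (Dinv • (1 : Matrix (Fin n) (Fin n) R))) := by simp only [mul_assoc]
    _ = ((B * A)⁻¹).map f * u * (B * A).map f := by rw [L2]
    _ = A⁻¹.map f * B⁻¹.map f * u * (B * A).map f := by rw [hBAinv]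
    _ = A⁻¹.map f * B⁻¹.map f * u * (B.map f * A.map f) := by rw [Matrix.map_mul]
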